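/- Let m be a Borel probability measure on ℝ^p × ℝ^q, let π : ℝ^p × ℝ^q → ℝ^p be the projection onto the first factor, let m̄ = π_*m be the projected measure, and let (m_t)_{t∈ℝ^p} be the conditional measures of m on the fibers {t} × ℝ^q given by Rokhlin disintegration. Define γ(t) = liminf_{ε→0} log m̄(B^p(t,ε)) / log ε. Suppose δ ≥ 0 is such that for m-almost every (t,s), δ ≤ liminf_{ε→0} log m_t(B^q(s,ε)) / log ε. Then for m-almost every (t,s), δ + γ(t) ≤ liminf_{ε→0} log m(B^{p+q}((t,s),ε)) / log ε, where B^{p+q} denotes balls in the product (max) metric on ℝ^p × ℝ^q. -/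

import Mathlib

open MeasureTheory Filter


open Metric Set ProbabilityTheory

set_option maxHeartbeats 1000000

noncomputable section


lemma LY.evA {α : Type*} {l : Filter α} {f : α → ℝ} (h0 : ∀ᶠ x in l, 0 ≤ f x)
    {η : ℝ} (hη : 0 < η) : ∀ᶠ x in l, liminf f l - η ≤ f x := by
  set S : Set ℝ := {a | ∀ᶠ x in l, a ≤ f x} with hS
  have h0S : (0:ℝ) ∈ S := h0
  have hlim : liminf f l = sSup S := liminf_eq
  obtain ⟨a, haS, ha⟩ : ∃ a ∈ S, liminf f l - η ≤ a := by
    by_cases hbdd : BddAbove S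
    · obtain ⟨a, haS, ha⟩ := exists_lt_of_lt_csSup ⟨0, h0S⟩
        (show sSup S - η < sSup S by linarith)
      exact ⟨a, haS, by rw [hlim]; linarith⟩
    · obtain ⟨a, haS, ha⟩ := not_bddAbove_iff.mp hbdd (liminf f l - η)
      exact ⟨a, haS, ha.le⟩
  exact haS.mono fun x hx => le_trans ha hx

lemma LY.leLiminf {α : Type*} {l : Filter α} [l.NeBot] {f : α → ℝ} {b C : ℝ}
    (hC : ∀ᶠ x in l, f x ≤ C) (h : ∀ η : ℝ, 0 < η → ∀ᶠ x in l, b - η ≤ f x) :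
    b ≤ liminf f l := by
  set S : Set ℝ := {a | ∀ᶠ x in l, a ≤ f x} with hS
  have hbdd : BddAbove S := by
    refine ⟨C, fun a ha => ?_⟩
    obtain ⟨x, hx1, hx2⟩ := (ha.and hC).exists
    linarith
  have hlim : liminf f l = sSup S := liminf_eq
  refine le_of_forall_pos_le_add fun η hη => ?_
  have hmem : b - η ∈ S := h η hη
  have : b - η ≤ sSup S := le_csSup hbdd hmem
  rw [hlim]; linarith



namespace LY

lemma tendsto_cmul {c : ℝ} (hc : 0 < c) :
    Tendsto (fun ε : ℝ => c * ε) (nhdsWithin 0 (Set.Ioi 0)) (nhdsWithin 0 (Set.Ioi 0)) := by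
  apply tendsto_nhdsWithin_of_tendsto_nhds_of_eventually_within
  · have : Tendsto (fun ε : ℝ => c * ε) (nhdsWithin 0 (Set.Ioi 0)) (nhds (c * 0)) :=
      (tendsto_const_nhds.mul tendsto_id).mono_left nhdsWithin_le_nhds
    simpa using this
  · filter_upwards [self_mem_nhdsWithin] with ε hε
    exact mul_pos hc hε

variable {p q : ℕ}

local notation "Eu" n => EuclideanSpace ℝ (Fin n)

lemma measKer (m : Measure ((Eu p) × (Eu q))) [IsFiniteMeasure m] (r : ℝ) :
    Measurable fun x : (Eu p) × (Eu q) => m.condKernel x.1 (ball x.2 r) := by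
  set κ' : Kernel ((Eu p) × (Eu q)) (Eu q) := m.condKernel.comap Prod.fst measurable_fst with hκ'
  haveI : IsSFiniteKernel κ' := by
    haveI : IsMarkovKernel κ' := ⟨fun a => by rw [hκ', Kernel.comap_apply]; infer_instance⟩
    infer_instance
  have ht : MeasurableSet {z : ((Eu p) × (Eu q)) × (Eu q) | dist z.2 z.1.2 < r} :=
    measurableSet_lt (by fun_prop) measurable_const
  have h1 := Kernel.measurable_kernel_prodMk_left (κ := κ') ht
  have h2 : ∀ x : (Eu p) × (Eu q), κ' x (Prod.mk x ⁻¹' {z : ((Eu p) × (Eu q)) × (Eu q) | dist z.2 z.1.2 < r})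
      = m.condKernel x.1 (ball x.2 r) := fun x => by
    rw [hκ', Kernel.comap_apply]; rfl
  simpa only [h2] using h1

lemma measureEq (m : Measure ((Eu p) × (Eu q))) [IsFiniteMeasure m]
    {S : Set ((Eu p) × (Eu q))} (hS : MeasurableSet S) :
    m S = ∫⁻ u, m.condKernel u (Prod.mk u ⁻¹' S) ∂m.fst := by
  conv_lhs => rw [← m.disintegrate m.condKernel]
  rw [Measure.compProd_apply hS]

lemma boundS (m : Measure ((Eu p) × (Eu q))) [IsFiniteMeasure m]
    {S : Set ((Eu p) × (Eu q))} (hS : MeasurableSet S)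
    {T : Set (Eu p)} (hT : MeasurableSet T) {c : ENNReal}
    (h : ∀ u, m.condKernel u (Prod.mk u ⁻¹' S) ≤ T.indicator (fun _ => c) u) :
    m S ≤ c * m.fst T := by
  rw [measureEq m hS]
  calc ∫⁻ u, m.condKernel u (Prod.mk u ⁻¹' S) ∂m.fst
      ≤ ∫⁻ u, T.indicator (fun _ => c) u ∂m.fst := lintegral_mono h
    _ = c * m.fst T := lintegral_indicator_const hT c


lemma step2 (m : Measure ((Eu p) × (Eu q))) [IsProbabilityMeasure m] :
    ∀ᵐ x ∂m, ∀ᶠ ε in nhdsWithin (0:ℝ) (Set.Ioi 0),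
      ENNReal.ofReal (ε ^ (Module.finrank ℝ ((Eu p) × (Eu q)) + 1)) ≤ m (ball x ε) := by
  set E := (Eu p) × (Eu q)
  set d := Module.finrank ℝ E with hd
  haveI : (volume : Measure E).IsAddHaarMeasure := by
    rw [Measure.volume_eq_prod]; exact Measure.prod.instIsAddHaarMeasure _ _
  have hB := Besicovitch.ae_tendsto_rnDeriv (volume : Measure E) m
  have hR := Measure.rnDeriv_lt_top (volume : Measure E) m
  filter_upwards [hB, hR] with x hx hlt
  set L := (volume : Measure E).rnDeriv m x with hL
  set K := L + 1 with hK
  have hK0 : K ≠ 0 := by simp [hK]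
  have hKtop : K ≠ ⊤ := by
    rw [hK]; exact ENNReal.add_ne_top.mpr ⟨hlt.ne, ENNReal.one_ne_top⟩
  have hev1 : ∀ᶠ r in nhdsWithin (0:ℝ) (Set.Ioi 0),
      volume (closedBall x r) / m (closedBall x r) < K :=
    hx.eventually_lt_const (ENNReal.lt_add_right hlt.ne one_ne_zero)
  set v₁ := volume (ball (0:E) 1) with hv₁
  have hv₁0 : v₁ ≠ 0 := (measure_ball_pos volume 0 one_pos).ne'
  have hv₁top : v₁ ≠ ⊤ := measure_ball_lt_top.ne
  set c := (v₁ / K).toReal with hc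
  have hvK0 : v₁ / K ≠ 0 := by
    simp only [ne_eq, ENNReal.div_eq_zero_iff, not_or]
    exact ⟨hv₁0, hKtop⟩
  have hvKtop : v₁ / K ≠ ⊤ := by
    simp only [ne_eq, ENNReal.div_eq_top, not_or, not_and_or]
    exact ⟨Or.inr hK0, Or.inl hv₁top⟩
  have hc0 : 0 < c := ENNReal.toReal_pos hvK0 hvKtop
  have hsmall : Set.Ioo (0:ℝ) (min 1 (c * (2⁻¹:ℝ)^d)) ∈ nhdsWithin (0:ℝ) (Set.Ioi 0) :=
    Ioo_mem_nhdsGT (lt_min one_pos (by positivity))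
  filter_upwards [(tendsto_cmul (by norm_num : (0:ℝ) < 2⁻¹)).eventually hev1, hsmall]
    with ε hε1 hε2
  obtain ⟨hε0, hεlt⟩ := hε2
  have hεhalf : (0:ℝ) < 2⁻¹ * ε := by positivity
  set a := volume (closedBall x (2⁻¹ * ε)) with ha
  set b := m (closedBall x (2⁻¹ * ε)) with hb
  have ha0 : a ≠ 0 := by
    refine ne_of_gt (lt_of_lt_of_le (measure_ball_pos volume x hεhalf) ?_)
    exact measure_mono ball_subset_closedBall
  have hab : a ≤ K * b := by
    by_cases hb0 : b = 0
    · exfalso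
      rw [hb0, ENNReal.div_zero ha0] at hε1
      exact (hε1.trans_le le_top).ne rfl
    · exact ((ENNReal.div_lt_iff (Or.inl hb0) (Or.inl (measure_ne_top m _))).mp hε1).le
  have hdivle : a / K ≤ b := by
    rw [ENNReal.div_le_iff hK0 hKtop]
    rw [mul_comm] at hab; exact hab
  have haval : a = ENNReal.ofReal ((2⁻¹ * ε) ^ d) * v₁ :=
    Measure.addHaar_closedBall volume x hεhalf.le
  have key : ENNReal.ofReal (ε ^ (d + 1)) ≤ a / K := by
    rw [haval, mul_div_assoc]
    have h1 : v₁ / K = ENNReal.ofReal c := (ENNReal.ofReal_toReal hvKtop).symm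
    rw [h1, ← ENNReal.ofReal_mul (by positivity)]
    apply ENNReal.ofReal_le_ofReal
    have : ε ^ (d+1) = ε ^ d * ε := by ring
    rw [this, mul_pow, mul_comm ((2⁻¹:ℝ)^d) (ε^d), mul_assoc, mul_comm ((2⁻¹:ℝ)^d) c]
    apply mul_le_mul_of_nonneg_left _ (by positivity)
    exact le_of_lt (lt_of_lt_of_le hεlt (min_le_right _ _))
  calc ENNReal.ofReal (ε ^ (d + 1)) ≤ a / K := key
    _ ≤ b := hdivle
    _ ≤ m (ball x ε) := measure_mono (closedBall_subset_ball (by linarith))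


lemma ratio_nonneg {v : ENNReal} (h1 : v ≤ 1) {ε : ℝ} (hε0 : 0 < ε) (hε1 : ε < 1) :
    0 ≤ Real.log v.toReal / Real.log ε := by
  apply div_nonneg_of_nonpos
  · exact Real.log_nonpos ENNReal.toReal_nonneg
      (by simpa using ENNReal.toReal_mono ENNReal.one_ne_top h1)
  · exact (Real.log_neg hε0 hε1).le

lemma dyadic {k : ℕ} {ε : ℝ} (hε : 0 < ε) (hlt : ε < (2⁻¹:ℝ)^(k+2)) :
    ∃ j, k ≤ j ∧ 2*ε < (2⁻¹:ℝ)^j ∧ (2⁻¹:ℝ)^j ≤ 4*ε := by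
  have hhalf0 : (0:ℝ) < 2⁻¹ := by norm_num
  have hhalf1 : (2⁻¹:ℝ) < 1 := by norm_num
  have hex : ∃ j : ℕ, (2⁻¹:ℝ)^j ≤ 4*ε := by
    obtain ⟨j, hj⟩ := exists_pow_lt_of_lt_one (by linarith : (0:ℝ) < 4*ε) hhalf1
    exact ⟨j, hj.le⟩
  classical
  set j := Nat.find hex with hj
  have hPj : (2⁻¹:ℝ)^j ≤ 4*ε := Nat.find_spec hex
  have hkj : k ≤ j := by
    by_contra hcon
    push_neg at hcon
    have h1 : (2⁻¹:ℝ)^k ≤ (2⁻¹:ℝ)^j :=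
      Bound.pow_le_pow_right_of_le_one_or_one_le (Or.inr ⟨hhalf0.le, hhalf1.le, hcon.le⟩)
    have h2 : (4:ℝ)*ε < 4 * (2⁻¹:ℝ)^(k+2) := by linarith
    have h3 : (4:ℝ) * (2⁻¹:ℝ)^(k+2) = (2⁻¹:ℝ)^k := by ring
    linarith
  refine ⟨j, hkj, ?_, hPj⟩
  rcases Nat.eq_zero_or_pos j with hj0 | hjpos
  · rw [hj0]
    have : (2⁻¹:ℝ)^(k+2) ≤ (2⁻¹:ℝ)^2 :=
      Bound.pow_le_pow_right_of_le_one_or_one_le (Or.inr ⟨hhalf0.le, hhalf1.le, by omega⟩)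
    norm_num at this ⊢
    linarith
  · obtain ⟨i, hi⟩ : ∃ i, j = i + 1 := ⟨j - 1, by omega⟩
    have hni : ¬ ((2⁻¹:ℝ)^i ≤ 4*ε) := Nat.find_min hex (by omega)
    push_neg at hni
    rw [hi]
    have : (2⁻¹:ℝ)^(i+1) = (2⁻¹:ℝ)^i * 2⁻¹ := pow_succ _ _
    linarith

end LY


/-- Ledrappier–Young lemma on lower pointwise dimensions: if `m` is a probability measure on
`ℝᵖ × ℝᵠ`, `m̄ = π_* m` its projection to the first factor with lower pointwise dimension
`γ(t)`, and the conditional measures `m_t` of the Rokhlin disintegration have lower pointwise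
dimension at least `δ ≥ 0` at `m`-a.e. point, then the lower pointwise dimension of `m` at
`m`-a.e. `(t,s)` is at least `δ + γ(t)` (balls in the product are for the max metric). -/
theorem stmt6 (p q : ℕ)
    (m : Measure (EuclideanSpace ℝ (Fin p) × EuclideanSpace ℝ (Fin q)))
    [IsProbabilityMeasure m]
    (γ : EuclideanSpace ℝ (Fin p) → ℝ)
    (hγ : ∀ t, γ t =
      liminf (fun ε : ℝ =>
        Real.log ((m.fst (Metric.ball t ε)).toReal) / Real.log ε)
        (nhdsWithin 0 (Set.Ioi 0)))
    (δ : ℝ) (hδ : 0 ≤ δ)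
    (hcond : ∀ᵐ x ∂m, δ ≤
      liminf (fun ε : ℝ =>
        Real.log ((m.condKernel x.1 (Metric.ball x.2 ε)).toReal) / Real.log ε)
        (nhdsWithin 0 (Set.Ioi 0))) :
    ∀ᵐ x ∂m, δ + γ x.1 ≤
      liminf (fun ε : ℝ =>
        Real.log ((m (Metric.ball x ε)).toReal) / Real.log ε)
        (nhdsWithin 0 (Set.Ioi 0)) := by
  classical
  set d : ℕ := Module.finrank ℝ (EuclideanSpace ℝ (Fin p) × EuclideanSpace ℝ (Fin q)) with hdd
  set θ : ℕ → ℝ := fun n => max 0 (δ - 1/((n:ℝ)+1)) with hθ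
  have hθ0 : ∀ n, 0 ≤ θ n := fun n => le_max_left _ _
  have hθδ : ∀ n : ℕ, δ - 1/((n:ℝ)+1) ≤ θ n := fun n => le_max_right _ _
  set rad : ℕ → ℝ := fun j => (2⁻¹:ℝ)^j with hrad
  have hrad0 : ∀ j, 0 < rad j := fun j => by positivity
  set G : ℕ → ℕ → Set (EuclideanSpace ℝ (Fin p) × EuclideanSpace ℝ (Fin q)) :=
    fun n k => {x | ∀ j : ℕ, k ≤ j →
      m.condKernel x.1 (Metric.ball x.2 (rad j)) ≤ ENNReal.ofReal ((rad j) ^ (θ n))} with hG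
  have hGmeas : ∀ n k, MeasurableSet (G n k) := by
    intro n k
    have hrw : G n k = ⋂ (j : ℕ), ⋂ (_ : k ≤ j),
        (fun x : EuclideanSpace ℝ (Fin p) × EuclideanSpace ℝ (Fin q) =>
          m.condKernel x.1 (Metric.ball x.2 (rad j))) ⁻¹'
          (Set.Iic (ENNReal.ofReal ((rad j) ^ (θ n)))) := by
      ext x
      simp only [hG, Set.mem_setOf_eq, Set.mem_iInter, Set.mem_preimage, Set.mem_Iic]
    rw [hrw]
    exact MeasurableSet.iInter fun j => MeasurableSet.iInter fun _ =>
      (LY.measKer m (rad j)) measurableSet_Iic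
  -- gamma eventual bound
  have hgamma : ∀ t, ∀ η : ℝ, 0 < η → ∀ᶠ ε in nhdsWithin (0:ℝ) (Set.Ioi 0),
      γ t - η ≤ Real.log ((m.fst (Metric.ball t ε)).toReal) / Real.log ε := by
    intro t η hη
    rw [hγ t]
    apply LY.evA _ hη
    filter_upwards [Ioo_mem_nhdsGT one_pos] with ε hε
    exact LY.ratio_nonneg prob_le_one hε.1 hε.2
  -- coboundedness and positivity
  have hcb : ∀ᵐ x ∂m, ∀ᶠ ε in nhdsWithin (0:ℝ) (Set.Ioi 0),
      0 < (m (Metric.ball x ε)).toReal ∧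
      Real.log ((m (Metric.ball x ε)).toReal) / Real.log ε ≤ (d:ℝ)+1 := by
    filter_upwards [LY.step2 m] with x hx
    filter_upwards [hx, Ioo_mem_nhdsGT one_pos] with ε h1 hε
    obtain ⟨hε0, hε1⟩ := hε
    have hfin : m (Metric.ball x ε) ≠ ⊤ := measure_ne_top m _
    have h2 : ε^(d+1) ≤ (m (Metric.ball x ε)).toReal := by
      have h3 := ENNReal.toReal_mono hfin h1
      rwa [ENNReal.toReal_ofReal (by positivity)] at h3
    have hpos : 0 < (m (Metric.ball x ε)).toReal := lt_of_lt_of_le (by positivity) h2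
    refine ⟨hpos, ?_⟩
    rw [div_le_iff_of_neg (Real.log_neg hε0 hε1)]
    have h4 : Real.log (ε^(d+1)) ≤ Real.log ((m (Metric.ball x ε)).toReal) :=
      Real.log_le_log (by positivity) h2
    rw [Real.log_pow] at h4
    push_cast at h4 ⊢
    linarith
  -- membership in good sets
  have hmem : ∀ n : ℕ, ∀ᵐ x ∂m, ∃ k, x ∈ G n k := by
    intro n
    by_cases hzero : δ - 1/((n:ℝ)+1) ≤ 0
    · refine Filter.Eventually.of_forall fun x => ⟨0, fun j hj => ?_⟩
      have hθn : θ n = 0 := max_eq_left hzero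
      rw [hθn, Real.rpow_zero, ENNReal.ofReal_one]
      exact prob_le_one
    · push_neg at hzero
      have hθn : θ n = δ - 1/((n:ℝ)+1) := max_eq_right (by linarith)
      set η2 : ℝ := 1/(2*((n:ℝ)+1)) with hη2
      have hη2pos : 0 < η2 := by positivity
      have hθlt : θ n < δ - η2 := by
        rw [hθn, hη2]
        have hlt : (1:ℝ)/(2*((n:ℝ)+1)) < 1/((n:ℝ)+1) :=
          one_div_lt_one_div_of_lt (by positivity) (by linarith [Nat.cast_nonneg (α := ℝ) n])
        linarith
      filter_upwards [hcond] with x hx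
      have h0ev : ∀ᶠ ε in nhdsWithin (0:ℝ) (Set.Ioi 0),
          0 ≤ Real.log ((m.condKernel x.1 (Metric.ball x.2 ε)).toReal) / Real.log ε := by
        filter_upwards [Ioo_mem_nhdsGT one_pos] with ε hε
        exact LY.ratio_nonneg prob_le_one hε.1 hε.2
      have hev := LY.evA h0ev hη2pos
      have hev2 : ∀ᶠ ε in nhdsWithin (0:ℝ) (Set.Ioi 0), 0 < ε ∧ ε < 1 ∧
          δ - η2 ≤ Real.log ((m.condKernel x.1 (Metric.ball x.2 ε)).toReal) / Real.log ε := by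
        filter_upwards [hev, Ioo_mem_nhdsGT one_pos] with ε h1 h2
        exact ⟨h2.1, h2.2, by linarith [hx]⟩
      rw [eventually_nhdsWithin_iff] at hev2
      obtain ⟨ε₀, hε₀pos, H⟩ := Metric.eventually_nhds_iff.mp hev2
      obtain ⟨k, hk⟩ := exists_pow_lt_of_lt_one hε₀pos (show (2⁻¹:ℝ) < 1 by norm_num)
      refine ⟨k, fun j hj => ?_⟩
      have hradle : rad j ≤ rad k :=
        Bound.pow_le_pow_right_of_le_one_or_one_le (Or.inr ⟨by norm_num, by norm_num, hj⟩)
      have hradlt : rad j < ε₀ := lt_of_le_of_lt hradle hk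
      have hdist : dist (rad j) (0:ℝ) < ε₀ := by
        rw [Real.dist_eq, sub_zero, abs_of_pos (hrad0 j)]; exact hradlt
      obtain ⟨hr0, hr1, hrle⟩ := H hdist (hrad0 j)
      set u := (m.condKernel x.1 (Metric.ball x.2 (rad j))).toReal with hu
      have hfin : m.condKernel x.1 (Metric.ball x.2 (rad j)) ≠ ⊤ := measure_ne_top _ _
      have hule : u ≤ (rad j) ^ (δ - η2) := by
        rcases eq_or_lt_of_le (ENNReal.toReal_nonneg : (0:ℝ) ≤ u) with h0 | h0
        · rw [hu, ← h0]; positivity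
        · have hlog : Real.log u ≤ (δ - η2) * Real.log (rad j) :=
            (le_div_iff_of_neg (Real.log_neg hr0 hr1)).mp hrle
          have h6 : Real.log u ≤ Real.log ((rad j) ^ (δ - η2)) := by
            rw [Real.log_rpow hr0]; exact hlog
          exact (Real.log_le_log_iff h0 (Real.rpow_pos_of_pos hr0 _)).mp h6
      have h7 : u ≤ (rad j) ^ (θ n) :=
        le_trans hule (Real.rpow_le_rpow_of_exponent_ge hr0 hr1.le hθlt.le)
      calc m.condKernel x.1 (Metric.ball x.2 (rad j))
          = ENNReal.ofReal u := (ENNReal.ofReal_toReal hfin).symm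
        _ ≤ ENNReal.ofReal ((rad j) ^ (θ n)) := ENNReal.ofReal_le_ofReal h7
  -- density
  have hdens : ∀ n k : ℕ, ∀ᵐ x ∂m, x ∈ G n k → ∀ᶠ ε in nhdsWithin (0:ℝ) (Set.Ioi 0),
      m (Metric.closedBall x ε) ≤ 2 * m (G n k ∩ Metric.closedBall x ε) := by
    intro n k
    have hbes := Besicovitch.ae_tendsto_measure_inter_div m (G n k)
    rw [ae_restrict_iff' (hGmeas n k)] at hbes
    filter_upwards [hbes] with x hx hxG
    have h2 := (hx hxG).eventually (eventually_gt_nhds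
      (show (2⁻¹ : ENNReal) < 1 from ENNReal.inv_lt_one.mpr ENNReal.one_lt_two))
    filter_upwards [h2] with ε hε
    by_cases h0 : m (Metric.closedBall x ε) = 0
    · rw [h0, mul_comm]; exact zero_le
    · have hne : m (Metric.closedBall x ε) ≠ ⊤ := measure_ne_top m _
      rw [ENNReal.lt_div_iff_mul_lt (Or.inl h0) (Or.inl hne)] at hε
      calc m (Metric.closedBall x ε)
          = 2 * (2⁻¹ * m (Metric.closedBall x ε)) := by
            rw [← mul_assoc, ENNReal.mul_inv_cancel two_ne_zero ENNReal.ofNat_ne_top, one_mul]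
        _ ≤ 2 * m (G n k ∩ Metric.closedBall x ε) := mul_le_mul_right hε.le _
  -- main estimate
  have hmain : ∀ᵐ x ∂m, ∀ n : ℕ, θ n + γ x.1 ≤
      liminf (fun ε : ℝ => Real.log ((m (Metric.ball x ε)).toReal) / Real.log ε)
        (nhdsWithin 0 (Set.Ioi 0)) := by
    filter_upwards [hcb, ae_all_iff.mpr hmem,
      ae_all_iff.mpr (fun n => ae_all_iff.mpr (hdens n))] with x hxcb hxmem hxdens
    intro n
    obtain ⟨k, hxG⟩ := hxmem n
    have hxd := hxdens n k hxG
    apply LY.leLiminf (C := (d:ℝ)+1)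
    · filter_upwards [hxcb] with ε h; exact h.2
    intro η hη
    set Cc : ℝ := Real.log 2 + θ n * Real.log 4 + (γ x.1 - η/2) * Real.log 2 with hCc
    have hlogbot : Filter.Tendsto Real.log (nhdsWithin (0:ℝ) (Set.Ioi 0)) Filter.atBot :=
      Real.tendsto_log_nhdsNE_zero.mono_left
        (nhdsWithin_mono 0 (fun y hy => Set.mem_compl_singleton_iff.mpr (ne_of_gt hy)))
    have hCtend : Filter.Tendsto (fun ε : ℝ => Cc / Real.log ε)
        (nhdsWithin (0:ℝ) (Set.Ioi 0)) (nhds 0) := by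
      have h1 : Filter.Tendsto (fun ε : ℝ => Cc / (- Real.log ε))
          (nhdsWithin (0:ℝ) (Set.Ioi 0)) (nhds 0) :=
        Filter.Tendsto.div_atTop tendsto_const_nhds (tendsto_neg_atBot_atTop.comp hlogbot)
      have h2 := h1.neg
      simp only [div_neg, neg_neg, neg_zero] at h2
      exact h2
    have hCev : ∀ᶠ ε in nhdsWithin (0:ℝ) (Set.Ioi 0), -(η/2) < Cc / Real.log ε :=
      hCtend.eventually (eventually_gt_nhds (by linarith))
    filter_upwards [hxcb, hxd, Ioo_mem_nhdsGT (hrad0 (k+2)),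
      (LY.tendsto_cmul (show (0:ℝ) < 2 by norm_num)).eventually
        (hgamma x.1 (η/2) (by linarith)),
      Ioo_mem_nhdsGT (show (0:ℝ) < 2⁻¹ by norm_num), hCev]
      with ε hcb' hd' hIooK hgam hIoohalf hCev'
    obtain ⟨hε0, hεK⟩ := hIooK
    obtain ⟨-, hεhalf⟩ := hIoohalf
    have hε1 : ε < 1 := lt_trans hεhalf (by norm_num)
    obtain ⟨hApos, -⟩ := hcb'
    obtain ⟨j, hjk, hj1', hj2'⟩ := LY.dyadic hε0 hεK
    have hj1 : 2*ε < rad j := hj1'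
    have hj2 : rad j ≤ 4*ε := hj2'
    have hc4pos : (0:ℝ) < (4*ε) ^ (θ n) := Real.rpow_pos_of_pos (by linarith) _
    have hslice : ∀ u, m.condKernel u (Prod.mk u ⁻¹' (G n k ∩ Metric.closedBall x ε)) ≤
        (Metric.closedBall x.1 ε).indicator
          (fun _ => ENNReal.ofReal ((4*ε) ^ (θ n))) u := by
      intro u
      by_cases hne : (Prod.mk u ⁻¹' (G n k ∩ Metric.closedBall x ε)).Nonempty
      · obtain ⟨s', hs'⟩ := hne
        have hs'G : (u, s') ∈ G n k := hs'.1
        have hs'B : dist (u, s') x ≤ ε := Metric.mem_closedBall.mp hs'.2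
        have hpair : max (dist u x.1) (dist s' x.2) ≤ ε := hs'B
        have hdists : dist s' x.2 ≤ ε := le_trans (le_max_right _ _) hpair
        have hdistu : dist u x.1 ≤ ε := le_trans (le_max_left _ _) hpair
        rw [Set.indicator_of_mem (Metric.mem_closedBall.mpr hdistu)]
        have hsub : Prod.mk u ⁻¹' (G n k ∩ Metric.closedBall x ε) ⊆
            Metric.ball s' (rad j) := by
          intro y hy
          have hyB : dist (u, y) x ≤ ε := Metric.mem_closedBall.mp hy.2
          have hpair2 : max (dist u x.1) (dist y x.2) ≤ ε := hyB
          have h1 : dist y x.2 ≤ ε := le_trans (le_max_right _ _) hpair2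
          have h2 : dist y s' ≤ dist y x.2 + dist s' x.2 := dist_triangle_right _ _ _
          have : dist y s' < rad j := by linarith
          exact Metric.mem_ball.mpr this
        calc m.condKernel u (Prod.mk u ⁻¹' (G n k ∩ Metric.closedBall x ε))
            ≤ m.condKernel u (Metric.ball s' (rad j)) := measure_mono hsub
          _ ≤ ENNReal.ofReal ((rad j) ^ (θ n)) := hs'G j hjk
          _ ≤ ENNReal.ofReal ((4*ε) ^ (θ n)) :=
              ENNReal.ofReal_le_ofReal (Real.rpow_le_rpow (hrad0 j).le hj2 (hθ0 n))
      · rw [Set.not_nonempty_iff_eq_empty] at hne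
        rw [hne, measure_empty]
        exact zero_le
    have hGb : m (G n k ∩ Metric.closedBall x ε) ≤
        ENNReal.ofReal ((4*ε) ^ (θ n)) * m.fst (Metric.closedBall x.1 ε) :=
      LY.boundS m ((hGmeas n k).inter measurableSet_closedBall)
        measurableSet_closedBall hslice
    have hchain : m (Metric.ball x ε) ≤
        2 * (ENNReal.ofReal ((4*ε) ^ (θ n)) * m.fst (Metric.ball x.1 (2*ε))) := by
      calc m (Metric.ball x ε) ≤ m (Metric.closedBall x ε) :=
            measure_mono Metric.ball_subset_closedBall
        _ ≤ 2 * m (G n k ∩ Metric.closedBall x ε) := hd'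
        _ ≤ 2 * (ENNReal.ofReal ((4*ε)^(θ n)) * m.fst (Metric.closedBall x.1 ε)) :=
            mul_le_mul_right hGb _
        _ ≤ _ := mul_le_mul_right (mul_le_mul_right
            (measure_mono (Metric.closedBall_subset_ball (by linarith))) _) _
    set A := (m (Metric.ball x ε)).toReal with hA
    set M := (m.fst (Metric.ball x.1 (2*ε))).toReal with hM
    have hMfin : m.fst (Metric.ball x.1 (2*ε)) ≠ ⊤ := measure_ne_top _ _
    have hAle : A ≤ 2 * ((4*ε)^(θ n) * M) := by
      have hRfin : (2 : ENNReal) * (ENNReal.ofReal ((4*ε) ^ (θ n)) *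
          m.fst (Metric.ball x.1 (2*ε))) ≠ ⊤ :=
        ENNReal.mul_ne_top (by norm_num) (ENNReal.mul_ne_top ENNReal.ofReal_ne_top hMfin)
      have h1 := ENNReal.toReal_mono hRfin hchain
      rw [ENNReal.toReal_mul, ENNReal.toReal_mul, ENNReal.toReal_ofReal hc4pos.le,
        ENNReal.toReal_ofNat] at h1
      exact h1
    have hMpos : 0 < M := by nlinarith [hApos, hc4pos, (ENNReal.toReal_nonneg : (0:ℝ) ≤ M)]
    have hlog2ε : Real.log (2*ε) < 0 := Real.log_neg (by linarith) (by
      have : 2*ε < 2*2⁻¹ := by linarith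
      norm_num at this
      linarith)
    have hgam2 : Real.log M ≤ (γ x.1 - η/2) * Real.log (2*ε) :=
      (le_div_iff_of_neg hlog2ε).mp hgam
    have hlogA : Real.log A ≤ Cc + (θ n + γ x.1 - η/2) * Real.log ε := by
      have h2 : Real.log A ≤ Real.log (2 * ((4*ε)^(θ n) * M)) :=
        Real.log_le_log hApos hAle
      rw [Real.log_mul two_ne_zero (by positivity),
        Real.log_mul (ne_of_gt hc4pos) (ne_of_gt hMpos),
        Real.log_rpow (by linarith : (0:ℝ) < 4*ε)] at h2
      have h4 : Real.log (4*ε) = Real.log 4 + Real.log ε :=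
        Real.log_mul (by norm_num) (ne_of_gt hε0)
      have h5 : Real.log (2*ε) = Real.log 2 + Real.log ε :=
        Real.log_mul (by norm_num) (ne_of_gt hε0)
      rw [h4] at h2
      rw [h5] at hgam2
      calc Real.log A ≤ Real.log 2 + θ n * (Real.log 4 + Real.log ε) + Real.log M := by
            linarith
        _ ≤ Real.log 2 + θ n * (Real.log 4 + Real.log ε) +
            (γ x.1 - η/2) * (Real.log 2 + Real.log ε) := by linarith
        _ = Cc + (θ n + γ x.1 - η/2) * Real.log ε := by rw [hCc]; ring
    have hlogε : Real.log ε < 0 := Real.log_neg hε0 hε1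
    have hfinal : θ n + γ x.1 - η/2 + Cc / Real.log ε ≤ Real.log A / Real.log ε := by
      rw [le_div_iff_of_neg hlogε]
      have hexp : (θ n + γ x.1 - η/2 + Cc / Real.log ε) * Real.log ε =
          (θ n + γ x.1 - η/2) * Real.log ε + Cc := by
        rw [add_mul, div_mul_cancel₀ _ (ne_of_lt hlogε)]
      rw [hexp]
      linarith
    calc θ n + γ x.1 - η ≤ θ n + γ x.1 - η/2 + Cc / Real.log ε := by linarith
      _ ≤ _ := hfinal
  -- conclusion
  filter_upwards [hmain] with x hx
  apply le_of_forall_pos_le_add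
  intro η hη
  obtain ⟨n, hn⟩ := exists_nat_one_div_lt hη
  have h1 := hx n
  have h2 := hθδ n
  linarith
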